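/- Along an affine segment f_t = (1−t)f₀ + t f₁ in C^∞(Σ), the functional M̂(f) = ∫_Σ i∂f ∧ ∂̄f + (1/4)∫_Σ |φ|²_{h₀} e^{2f} ω − (τ/2V)(V − 4πN/τ)∫_Σ f ω − (1/4)∫_Σ |φ|²_{h₀} ω satisfies (d²/dt²) M̂(f_t) = 2∫_Σ i∂(f₁−f₀) ∧ ∂̄(f₁−f₀) + ∫_Σ (f₁−f₀)²|φ|²_{h₀} e^{2f_t} ω ≥ 0, with equality for all t only if f₁ = f₀ (given φ ≢ 0). Hence M̂ is convex along affine segments and its critical point, if it exists, is unique. -/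

import Mathlib

open MeasureTheory

lemma vfac_sign (a b : ℝ) : 0 ≤ (b - a) * (Real.exp b - Real.exp a) := by
  rcases le_total a b with h | h
  · have := Real.exp_le_exp.2 h
    nlinarith
  · have := Real.exp_le_exp.2 h
    nlinarith

lemma vfac_abs_sub {a b M : ℝ} (ha : |a| ≤ M) (hb : |b| ≤ M) : |a - b| ≤ 2 * M := by
  rw [sub_eq_add_neg]
  calc |a + -b| ≤ |a| + |-b| := abs_add_le _ _
  _ = |a| + |b| := by rw [abs_neg]
  _ ≤ 2 * M := by linarith

lemma vfac_integrable {X : Type*} [MeasurableSpace X] {μ : Measure X} [IsFiniteMeasure μ]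
    {f : X → ℝ} (hm : Measurable f) {C : ℝ} (hC : ∀ x, |f x| ≤ C) :
    Integrable f μ :=
  ⟨hm.aestronglyMeasurable,
    HasFiniteIntegral.of_bounded (C := C) (ae_of_all _ fun x => by simpa using hC x)⟩

lemma vfac_expo {a b M : ℝ} (hM : 0 ≤ M) (ha : |a| ≤ M) (hb : |b| ≤ M) {s t : ℝ}
    (hs : |s - t| ≤ 1) :
    2 * ((1 - s) * a + s * b) ≤ 2 * (2 * |t| + 3) * M := by
  have h0 : |s| - |t| ≤ |s - t| := abs_sub_abs_le_abs_sub s t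
  have h1 : |s| ≤ |t| + 1 := by linarith
  have h2 : |1 - s| ≤ 1 + |s| := by
    have := abs_add_le 1 (-s)
    simpa [sub_eq_add_neg] using this
  have e1 : (1 - s) * a ≤ (|t| + 2) * M := by
    calc (1 - s) * a ≤ |(1 - s) * a| := le_abs_self _
    _ = |1 - s| * |a| := abs_mul _ _
    _ ≤ (|t| + 2) * M := mul_le_mul (by linarith) ha (abs_nonneg _) (by positivity)
  have e2 : s * b ≤ (|t| + 1) * M := by
    calc s * b ≤ |s * b| := le_abs_self _
    _ = |s| * |b| := abs_mul _ _
    _ ≤ (|t| + 1) * M := mul_le_mul h1 hb (abs_nonneg _) (by positivity)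
  nlinarith

lemma vfac_hasDeriv {X : Type*} [MeasurableSpace X] (μ : Measure X) [IsFiniteMeasure μ]
    (f₀ f₁ w : X → ℝ) (hf₀ : Measurable f₀) (hf₁ : Measurable f₁) (hw : Measurable w)
    (M C : ℝ) (hM : 0 ≤ M) (hb₀ : ∀ x, |f₀ x| ≤ M) (hb₁ : ∀ x, |f₁ x| ≤ M)
    (hC : ∀ x, |w x| ≤ C) (t : ℝ) :
    HasDerivAt (fun s => ∫ x, w x * Real.exp (2 * ((1 - s) * f₀ x + s * f₁ x)) ∂μ)
      (∫ x, 2 * (f₁ x - f₀ x) * w x * Real.exp (2 * ((1 - t) * f₀ x + t * f₁ x)) ∂μ) t := by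
  have hmeasE : ∀ s : ℝ, Measurable fun x => Real.exp (2 * ((1 - s) * f₀ x + s * f₁ x)) :=
    fun s => (((hf₀.const_mul (1 - s)).add (hf₁.const_mul s)).const_mul 2).exp
  have hC0ofx : ∀ x : X, (0 : ℝ) ≤ C := fun x => (abs_nonneg _).trans (hC x)
  refine (hasDerivAt_integral_of_dominated_loc_of_deriv_le (s := Metric.ball t 1) (Metric.ball_mem_nhds t one_pos)
    (F := fun s x => w x * Real.exp (2 * ((1 - s) * f₀ x + s * f₁ x)))
    (F' := fun s x => 2 * (f₁ x - f₀ x) * w x * Real.exp (2 * ((1 - s) * f₀ x + s * f₁ x)))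
    (bound := fun _ => 2 * (2 * M) * C * Real.exp (2 * (2 * |t| + 3) * M))
    ?_ ?_ ?_ ?_ ?_ ?_).2
  · exact Filter.Eventually.of_forall fun s => (hw.mul (hmeasE s)).aestronglyMeasurable
  · refine vfac_integrable (hw.mul (hmeasE t))
      (C := C * Real.exp (2 * (2 * |t| + 3) * M)) fun x => ?_
    rw [abs_mul, abs_of_pos (Real.exp_pos _)]
    exact mul_le_mul (hC x)
      (Real.exp_le_exp.2 (vfac_expo hM (hb₀ x) (hb₁ x) (by simp)))
      (Real.exp_pos _).le (hC0ofx x)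
  · exact ((((hf₁.sub hf₀).const_mul 2).mul hw).mul (hmeasE t)).aestronglyMeasurable
  · refine ae_of_all _ fun x s hs => ?_
    have hsd : |s - t| ≤ 1 := by
      have := mem_ball_iff_norm.1 hs
      rw [Real.norm_eq_abs] at this
      linarith
    have hd : |f₁ x - f₀ x| ≤ 2 * M := vfac_abs_sub (hb₁ x) (hb₀ x)
    have hE : Real.exp (2 * ((1 - s) * f₀ x + s * f₁ x))
        ≤ Real.exp (2 * (2 * |t| + 3) * M) :=
      Real.exp_le_exp.2 (vfac_expo hM (hb₀ x) (hb₁ x) hsd)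
    rw [Real.norm_eq_abs, abs_mul, abs_mul, abs_mul, abs_of_pos (Real.exp_pos _), abs_two]
    have h1 : 2 * |f₁ x - f₀ x| * |w x| ≤ 2 * (2 * M) * C :=
      mul_le_mul (by linarith) (hC x) (abs_nonneg _) (by linarith)
    exact mul_le_mul h1 hE (Real.exp_pos _).le
      (by nlinarith [hC0ofx x, hM])
  · exact integrable_const _
  · refine ae_of_all _ fun x s hs => ?_
    have hlin : HasDerivAt (fun s : ℝ => 2 * ((1 - s) * f₀ x + s * f₁ x))
        (2 * (f₁ x - f₀ x)) s := by
      have h : HasDerivAt (fun s : ℝ => 2 * f₀ x + 2 * (f₁ x - f₀ x) * s)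
          (2 * (f₁ x - f₀ x)) s := by
        simpa using ((hasDerivAt_id s).const_mul (2 * (f₁ x - f₀ x))).const_add (2 * f₀ x)
      have heq : (fun s : ℝ => 2 * ((1 - s) * f₀ x + s * f₁ x))
          = fun s : ℝ => 2 * f₀ x + 2 * (f₁ x - f₀ x) * s := funext fun s => by ring
      rw [heq]
      exact h
    have h3 := HasDerivAt.const_mul (w x) hlin.exp
    refine h3.congr_deriv ?_
    ring

theorem vortex_functional_affine_convexity
    {X : Type*} [MeasurableSpace X] (μ : Measure X) [IsFiniteMeasure μ]
    (B : (X → ℝ) → (X → ℝ) → ℝ) (f₀ f₁ φ₀ : X → ℝ) (k c₀ M : ℝ)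
    (hBsymm : ∀ u v, B u v = B v u)
    (hBadd : ∀ u v w, B (u + v) w = B u w + B v w)
    (hBsmul : ∀ (a : ℝ) (u v : X → ℝ), B (a • u) v = a * B u v)
    (hBpos : ∀ u, 0 ≤ B u u)
    (hf₀ : Measurable f₀) (hf₁ : Measurable f₁) (hφm : Measurable φ₀)
    (hφ0 : ∀ x, 0 ≤ φ₀ x) (hφpos : ∀ᵐ x ∂μ, 0 < φ₀ x)
    (hbd : ∀ x, |f₀ x| ≤ M ∧ |f₁ x| ≤ M ∧ φ₀ x ≤ M)
    (hf₀int : Integrable f₀ μ) (hf₁int : Integrable f₁ μ) :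
    let g : ℝ → ℝ := fun t =>
      B ((1 - t) • f₀ + t • f₁) ((1 - t) • f₀ + t • f₁)
        + (1 / 4) * (∫ x, φ₀ x * Real.exp (2 * ((1 - t) * f₀ x + t * f₁ x)) ∂μ)
        - k * (∫ x, ((1 - t) * f₀ x + t * f₁ x) ∂μ) - c₀
    (∀ t : ℝ, iteratedDeriv 2 g t =
        2 * B (f₁ - f₀) (f₁ - f₀)
          + ∫ x, (f₁ x - f₀ x) ^ 2 * φ₀ x * Real.exp (2 * ((1 - t) * f₀ x + t * f₁ x)) ∂μ) ∧
    (∀ t : ℝ, 0 ≤ iteratedDeriv 2 g t) ∧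
    ConvexOn ℝ Set.univ g ∧
    ((∀ t : ℝ, iteratedDeriv 2 g t = 0) → f₁ =ᵐ[μ] f₀) ∧
    (deriv g 0 = 0 → deriv g 1 = 0 → f₁ =ᵐ[μ] f₀) := by
  intro g
  set M' := |M| with hM'def
  have hM' : 0 ≤ M' := abs_nonneg M
  have hb₀ : ∀ x, |f₀ x| ≤ M' := fun x => (hbd x).1.trans (le_abs_self M)
  have hb₁ : ∀ x, |f₁ x| ≤ M' := fun x => (hbd x).2.1.trans (le_abs_self M)
  have hφb : ∀ x, |φ₀ x| ≤ M' := fun x => by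
    rw [abs_of_nonneg (hφ0 x)]
    exact (hbd x).2.2.trans (le_abs_self M)
  -- first derivative of the exponential integral
  have hI' : ∀ t : ℝ,
      HasDerivAt (fun s => ∫ x, φ₀ x * Real.exp (2 * ((1 - s) * f₀ x + s * f₁ x)) ∂μ)
        (∫ x, 2 * (f₁ x - f₀ x) * φ₀ x * Real.exp (2 * ((1 - t) * f₀ x + t * f₁ x)) ∂μ) t :=
    fun t => vfac_hasDeriv μ f₀ f₁ φ₀ hf₀ hf₁ hφm M' M' hM' hb₀ hb₁ hφb t
  have hw2 : Measurable (fun x => 2 * (f₁ x - f₀ x) * φ₀ x) :=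
    ((hf₁.sub hf₀).const_mul 2).mul hφm
  have hw2b : ∀ x, |2 * (f₁ x - f₀ x) * φ₀ x| ≤ 4 * M' * M' := by
    intro x
    calc |2 * (f₁ x - f₀ x) * φ₀ x| = 2 * |f₁ x - f₀ x| * |φ₀ x| := by
          rw [abs_mul, abs_mul, abs_two]
    _ ≤ 4 * M' * M' := by
        have h1 := vfac_abs_sub (hb₁ x) (hb₀ x)
        have h2 := hφb x
        have h3 := abs_nonneg (f₁ x - f₀ x)
        have h4 := abs_nonneg (φ₀ x)
        nlinarith
  have hI'' : ∀ t : ℝ,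
      HasDerivAt (fun s => ∫ x, 2 * (f₁ x - f₀ x) * φ₀ x
            * Real.exp (2 * ((1 - s) * f₀ x + s * f₁ x)) ∂μ)
        (∫ x, 2 * (f₁ x - f₀ x) * (2 * (f₁ x - f₀ x) * φ₀ x)
            * Real.exp (2 * ((1 - t) * f₀ x + t * f₁ x)) ∂μ) t :=
    fun t => vfac_hasDeriv μ f₀ f₁ _ hf₀ hf₁ hw2 M' (4 * M' * M') hM' hb₀ hb₁ hw2b t
  -- generic integrability
  have hInt : ∀ (t : ℝ) (w : X → ℝ), Measurable w → ∀ C : ℝ, (∀ x, |w x| ≤ C) →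
      Integrable (fun x => w x * Real.exp (2 * ((1 - t) * f₀ x + t * f₁ x))) μ := by
    intro t w hw C hwb
    refine vfac_integrable
      (hw.mul ((((hf₀.const_mul (1 - t)).add (hf₁.const_mul t)).const_mul 2).exp))
      (C := C * Real.exp (2 * (2 * |t| + 3) * M')) fun x => ?_
    rw [abs_mul, abs_of_pos (Real.exp_pos _)]
    exact mul_le_mul (hwb x)
      (Real.exp_le_exp.2 (vfac_expo hM' (hb₀ x) (hb₁ x) (by simp)))
      (Real.exp_pos _).le ((abs_nonneg _).trans (hwb x))
  -- expansion of the bilinear part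
  have haddr : ∀ u v w : X → ℝ, B u (v + w) = B u v + B u w := by
    intro u v w
    calc B u (v + w) = B (v + w) u := hBsymm _ _
    _ = B v u + B w u := hBadd _ _ _
    _ = B u v + B u w := by rw [hBsymm v u, hBsymm w u]
  have hsmulr : ∀ (a : ℝ) (u v : X → ℝ), B u (a • v) = a * B u v := by
    intro a u v
    calc B u (a • v) = B (a • v) u := hBsymm _ _
    _ = a * B v u := hBsmul _ _ _
    _ = a * B u v := by rw [hBsymm v u]
  have hBexp : ∀ t : ℝ, B ((1 - t) • f₀ + t • f₁) ((1 - t) • f₀ + t • f₁)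
      = B f₀ f₀ + 2 * B (f₁ - f₀) f₀ * t + B (f₁ - f₀) (f₁ - f₀) * t ^ 2 := by
    intro t
    have hsplit : ((1 - t) • f₀ + t • f₁ : X → ℝ) = f₀ + t • (f₁ - f₀) := by
      funext x
      simp only [Pi.add_apply, Pi.smul_apply, Pi.sub_apply, smul_eq_mul]
      ring
    rw [hsplit]
    simp only [hBadd, haddr, hBsmul, hsmulr, hBsymm f₀ (f₁ - f₀)]
    ring
  have hLexp : ∀ t : ℝ, (∫ x, ((1 - t) * f₀ x + t * f₁ x) ∂μ)
      = (∫ x, f₀ x ∂μ) + t * (∫ x, (f₁ x - f₀ x) ∂μ) := by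
    intro t
    have hgi : Integrable (fun x => t * (f₁ x - f₀ x)) μ := (hf₁int.sub hf₀int).const_mul t
    rw [← integral_const_mul, ← integral_add hf₀int hgi]
    exact integral_congr_ae (ae_of_all _ fun x => by ring)
  have hgval : ∀ t : ℝ, g t =
      B f₀ f₀ + 2 * B (f₁ - f₀) f₀ * t + B (f₁ - f₀) (f₁ - f₀) * t ^ 2
        + (1 / 4) * (∫ x, φ₀ x * Real.exp (2 * ((1 - t) * f₀ x + t * f₁ x)) ∂μ)
        - k * ((∫ x, f₀ x ∂μ) + t * (∫ x, (f₁ x - f₀ x) ∂μ)) - c₀ := by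
    intro t
    have hgt : g t = B ((1 - t) • f₀ + t • f₁) ((1 - t) • f₀ + t • f₁)
        + (1 / 4) * (∫ x, φ₀ x * Real.exp (2 * ((1 - t) * f₀ x + t * f₁ x)) ∂μ)
        - k * (∫ x, ((1 - t) * f₀ x + t * f₁ x) ∂μ) - c₀ := rfl
    rw [hgt, hBexp t, hLexp t]
  have hgfun : g = fun t : ℝ =>
      B f₀ f₀ + 2 * B (f₁ - f₀) f₀ * t + B (f₁ - f₀) (f₁ - f₀) * t ^ 2
        + (1 / 4) * (∫ x, φ₀ x * Real.exp (2 * ((1 - t) * f₀ x + t * f₁ x)) ∂μ)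
        - k * ((∫ x, f₀ x ∂μ) + t * (∫ x, (f₁ x - f₀ x) ∂μ)) - c₀ := funext hgval
  -- first derivative of g
  have hD1 : ∀ t : ℝ, HasDerivAt g
      (2 * B (f₁ - f₀) f₀ + 2 * B (f₁ - f₀) (f₁ - f₀) * t
        + (1 / 4) * (∫ x, 2 * (f₁ x - f₀ x) * φ₀ x
            * Real.exp (2 * ((1 - t) * f₀ x + t * f₁ x)) ∂μ)
        - k * (∫ x, (f₁ x - f₀ x) ∂μ)) t := by
    intro t
    rw [hgfun]
    have h1 : HasDerivAt (fun s : ℝ => 2 * B (f₁ - f₀) f₀ * s) (2 * B (f₁ - f₀) f₀) t := by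
      simpa using (hasDerivAt_id t).const_mul (2 * B (f₁ - f₀) f₀)
    have h2 : HasDerivAt (fun s : ℝ => B (f₁ - f₀) (f₁ - f₀) * s ^ 2)
        (B (f₁ - f₀) (f₁ - f₀) * (2 * t)) t := by
      have := (hasDerivAt_pow 2 t).const_mul (B (f₁ - f₀) (f₁ - f₀))
      simpa using this
    have h3 := (hI' t).const_mul (1 / 4 : ℝ)
    have h4 : HasDerivAt (fun s : ℝ => k * ((∫ x, f₀ x ∂μ) + s * (∫ x, (f₁ x - f₀ x) ∂μ)))
        (k * (∫ x, (f₁ x - f₀ x) ∂μ)) t := by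
      simpa using
        (((hasDerivAt_id t).mul_const (∫ x, (f₁ x - f₀ x) ∂μ)).const_add
          (∫ x, f₀ x ∂μ)).const_mul k
    have hcomb := ((((h1.const_add (B f₀ f₀)).add h2).add h3).sub h4).sub_const c₀
    refine hcomb.congr_deriv ?_
    ring
  have hDg : deriv g = fun t : ℝ =>
      2 * B (f₁ - f₀) f₀ + 2 * B (f₁ - f₀) (f₁ - f₀) * t
        + (1 / 4) * (∫ x, 2 * (f₁ x - f₀ x) * φ₀ x
            * Real.exp (2 * ((1 - t) * f₀ x + t * f₁ x)) ∂μ)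
        - k * (∫ x, (f₁ x - f₀ x) ∂μ) := funext fun t => (hD1 t).deriv
  have h4int : ∀ t : ℝ, (∫ x, 2 * (f₁ x - f₀ x) * (2 * (f₁ x - f₀ x) * φ₀ x)
        * Real.exp (2 * ((1 - t) * f₀ x + t * f₁ x)) ∂μ)
      = 4 * ∫ x, (f₁ x - f₀ x) ^ 2 * φ₀ x
          * Real.exp (2 * ((1 - t) * f₀ x + t * f₁ x)) ∂μ := by
    intro t
    rw [← integral_const_mul]
    exact integral_congr_ae (ae_of_all _ fun x => by ring)
  have hD2 : ∀ t : ℝ, HasDerivAt (deriv g)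
      (2 * B (f₁ - f₀) (f₁ - f₀)
        + ∫ x, (f₁ x - f₀ x) ^ 2 * φ₀ x
            * Real.exp (2 * ((1 - t) * f₀ x + t * f₁ x)) ∂μ) t := by
    intro t
    rw [hDg]
    have h2 : HasDerivAt (fun s : ℝ => 2 * B (f₁ - f₀) (f₁ - f₀) * s)
        (2 * B (f₁ - f₀) (f₁ - f₀)) t := by
      simpa using (hasDerivAt_id t).const_mul (2 * B (f₁ - f₀) (f₁ - f₀))
    have h3 := (hI'' t).const_mul (1 / 4 : ℝ)
    have hcomb := (((h2.const_add (2 * B (f₁ - f₀) f₀)).add h3)).sub_const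
      (k * (∫ x, (f₁ x - f₀ x) ∂μ))
    refine hcomb.congr_deriv ?_
    rw [h4int t]
    ring
  have hit : ∀ t : ℝ, iteratedDeriv 2 g t =
      2 * B (f₁ - f₀) (f₁ - f₀)
        + ∫ x, (f₁ x - f₀ x) ^ 2 * φ₀ x
            * Real.exp (2 * ((1 - t) * f₀ x + t * f₁ x)) ∂μ := by
    intro t
    rw [iteratedDeriv_succ, iteratedDeriv_one]
    exact (hD2 t).deriv
  have hnnint : ∀ (t : ℝ) (x : X), 0 ≤ (f₁ x - f₀ x) ^ 2 * φ₀ x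
      * Real.exp (2 * ((1 - t) * f₀ x + t * f₁ x)) := fun t x =>
    mul_nonneg (mul_nonneg (sq_nonneg _) (hφ0 x)) (Real.exp_pos _).le
  have hnn : ∀ t : ℝ, 0 ≤ iteratedDeriv 2 g t := by
    intro t
    rw [hit t]
    exact add_nonneg (by linarith [hBpos (f₁ - f₀)]) (integral_nonneg (hnnint t))
  have hw3 : Measurable fun x => (f₁ x - f₀ x) ^ 2 * φ₀ x :=
    ((hf₁.sub hf₀).pow_const 2).mul hφm
  have hw3b : ∀ x, |(f₁ x - f₀ x) ^ 2 * φ₀ x| ≤ 4 * M' * M' * M' := by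
    intro x
    rw [abs_of_nonneg (mul_nonneg (sq_nonneg _) (hφ0 x))]
    have h1 := vfac_abs_sub (hb₁ x) (hb₀ x)
    have h3 := abs_nonneg (f₁ x - f₀ x)
    have h4 := sq_abs (f₁ x - f₀ x)
    have h5 := hφ0 x
    have h2' : φ₀ x ≤ M' := (le_abs_self _).trans (hφb x)
    have hsq : (f₁ x - f₀ x) ^ 2 ≤ 4 * M' * M' := by nlinarith
    calc (f₁ x - f₀ x) ^ 2 * φ₀ x ≤ (4 * M' * M') * M' :=
          mul_le_mul hsq h2' h5 (by nlinarith)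
    _ = 4 * M' * M' * M' := by ring
  have hw3int : ∀ t : ℝ, Integrable (fun x => (f₁ x - f₀ x) ^ 2 * φ₀ x
      * Real.exp (2 * ((1 - t) * f₀ x + t * f₁ x))) μ :=
    fun t => hInt t _ hw3 _ hw3b
  refine ⟨hit, hnn, ?_, ?_, ?_⟩
  · -- convexity
    refine convexOn_univ_of_deriv2_nonneg (fun t => (hD1 t).differentiableAt)
      (fun t => (hD2 t).differentiableAt) fun t => ?_
    have hiter : deriv^[2] g t = deriv (deriv g) t := by
      simp only [Function.iterate_succ, Function.iterate_zero, Function.comp_apply, id_eq]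
    rw [hiter, (hD2 t).deriv]
    exact add_nonneg (by linarith [hBpos (f₁ - f₀)]) (integral_nonneg (hnnint t))
  · -- vanishing second derivative implies f₁ = f₀ a.e.
    intro h
    have h0 := h 0
    rw [hit 0] at h0
    have hBnn := hBpos (f₁ - f₀)
    have hintnn : 0 ≤ ∫ x, (f₁ x - f₀ x) ^ 2 * φ₀ x
        * Real.exp (2 * ((1 - (0:ℝ)) * f₀ x + (0:ℝ) * f₁ x)) ∂μ := integral_nonneg (hnnint 0)
    have hint0 : (∫ x, (f₁ x - f₀ x) ^ 2 * φ₀ x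
        * Real.exp (2 * ((1 - (0:ℝ)) * f₀ x + (0:ℝ) * f₁ x)) ∂μ) = 0 := by linarith
    have hae := (integral_eq_zero_iff_of_nonneg (hnnint 0) (hw3int 0)).1 hint0
    filter_upwards [hae, hφpos] with x h1 h2
    have h1' : (f₁ x - f₀ x) ^ 2 * φ₀ x
        * Real.exp (2 * ((1 - (0:ℝ)) * f₀ x + (0:ℝ) * f₁ x)) = 0 := h1
    rcases mul_eq_zero.1 h1' with h | h
    · rcases mul_eq_zero.1 h with h' | h'
      · have h6 : f₁ x - f₀ x = 0 := sq_eq_zero_iff.1 h'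
        linarith
      · exact absurd h' h2.ne'
    · exact absurd h (Real.exp_pos _).ne'
  · -- critical point uniqueness
    intro h0 h1g
    have hA : 2 * B (f₁ - f₀) f₀ + 2 * B (f₁ - f₀) (f₁ - f₀) * (0:ℝ)
        + (1 / 4) * (∫ x, 2 * (f₁ x - f₀ x) * φ₀ x
            * Real.exp (2 * ((1 - (0:ℝ)) * f₀ x + (0:ℝ) * f₁ x)) ∂μ)
        - k * (∫ x, (f₁ x - f₀ x) ∂μ) = 0 := by
      rw [← (hD1 0).deriv]; exact h0
    have hB1 : 2 * B (f₁ - f₀) f₀ + 2 * B (f₁ - f₀) (f₁ - f₀) * (1:ℝ)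
        + (1 / 4) * (∫ x, 2 * (f₁ x - f₀ x) * φ₀ x
            * Real.exp (2 * ((1 - (1:ℝ)) * f₀ x + (1:ℝ) * f₁ x)) ∂μ)
        - k * (∫ x, (f₁ x - f₀ x) ∂μ) = 0 := by
      rw [← (hD1 1).deriv]; exact h1g
    have hi0 := hInt 0 _ hw2 _ hw2b
    have hi1 := hInt 1 _ hw2 _ hw2b
    have hdiff : (∫ x, (2 * (f₁ x - f₀ x) * φ₀ x
          * Real.exp (2 * ((1 - (1:ℝ)) * f₀ x + (1:ℝ) * f₁ x))
        - 2 * (f₁ x - f₀ x) * φ₀ x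
          * Real.exp (2 * ((1 - (0:ℝ)) * f₀ x + (0:ℝ) * f₁ x))) ∂μ)
        = (∫ x, 2 * (f₁ x - f₀ x) * φ₀ x
            * Real.exp (2 * ((1 - (1:ℝ)) * f₀ x + (1:ℝ) * f₁ x)) ∂μ)
          - ∫ x, 2 * (f₁ x - f₀ x) * φ₀ x
            * Real.exp (2 * ((1 - (0:ℝ)) * f₀ x + (0:ℝ) * f₁ x)) ∂μ :=
      integral_sub hi1 hi0
    have hdnn : ∀ x, 0 ≤ 2 * (f₁ x - f₀ x) * φ₀ x
          * Real.exp (2 * ((1 - (1:ℝ)) * f₀ x + (1:ℝ) * f₁ x))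
        - 2 * (f₁ x - f₀ x) * φ₀ x
          * Real.exp (2 * ((1 - (0:ℝ)) * f₀ x + (0:ℝ) * f₁ x)) := by
      intro x
      have hs := vfac_sign (2 * ((1 - (0:ℝ)) * f₀ x + (0:ℝ) * f₁ x))
        (2 * ((1 - (1:ℝ)) * f₀ x + (1:ℝ) * f₁ x))
      nlinarith [hφ0 x]
    have hdnnint : 0 ≤ ∫ x, (2 * (f₁ x - f₀ x) * φ₀ x
          * Real.exp (2 * ((1 - (1:ℝ)) * f₀ x + (1:ℝ) * f₁ x))
        - 2 * (f₁ x - f₀ x) * φ₀ x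
          * Real.exp (2 * ((1 - (0:ℝ)) * f₀ x + (0:ℝ) * f₁ x))) ∂μ := integral_nonneg hdnn
    have hBnn := hBpos (f₁ - f₀)
    have hdzero : (∫ x, (2 * (f₁ x - f₀ x) * φ₀ x
          * Real.exp (2 * ((1 - (1:ℝ)) * f₀ x + (1:ℝ) * f₁ x))
        - 2 * (f₁ x - f₀ x) * φ₀ x
          * Real.exp (2 * ((1 - (0:ℝ)) * f₀ x + (0:ℝ) * f₁ x))) ∂μ) = 0 := by
      have hstep : 2 * B (f₁ - f₀) (f₁ - f₀)
          + (1/4) * (∫ x, 2 * (f₁ x - f₀ x) * φ₀ x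
              * Real.exp (2 * ((1 - (1:ℝ)) * f₀ x + (1:ℝ) * f₁ x)) ∂μ)
          - (1/4) * (∫ x, 2 * (f₁ x - f₀ x) * φ₀ x
              * Real.exp (2 * ((1 - (0:ℝ)) * f₀ x + (0:ℝ) * f₁ x)) ∂μ) = 0 := by
        linarith [hA, hB1]
      rw [hdiff]
      set c := B (f₁ - f₀) (f₁ - f₀) with hc
      set J1 := ∫ x, 2 * (f₁ x - f₀ x) * φ₀ x
          * Real.exp (2 * ((1 - (1:ℝ)) * f₀ x + (1:ℝ) * f₁ x)) ∂μ with hJ1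
      set J0 := ∫ x, 2 * (f₁ x - f₀ x) * φ₀ x
          * Real.exp (2 * ((1 - (0:ℝ)) * f₀ x + (0:ℝ) * f₁ x)) ∂μ with hJ0
      linarith [hstep, hBnn, hdnnint, hdiff]
    have hae := (integral_eq_zero_iff_of_nonneg hdnn (hi1.sub hi0)).1 hdzero
    filter_upwards [hae, hφpos] with x h1 h2
    have h1' : 2 * (f₁ x - f₀ x) * φ₀ x
          * Real.exp (2 * ((1 - (1:ℝ)) * f₀ x + (1:ℝ) * f₁ x))
        - 2 * (f₁ x - f₀ x) * φ₀ x
          * Real.exp (2 * ((1 - (0:ℝ)) * f₀ x + (0:ℝ) * f₁ x)) = 0 := h1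
    have heq : 2 * (f₁ x - f₀ x) * φ₀ x
          * Real.exp (2 * ((1 - (1:ℝ)) * f₀ x + (1:ℝ) * f₁ x))
        - 2 * (f₁ x - f₀ x) * φ₀ x
          * Real.exp (2 * ((1 - (0:ℝ)) * f₀ x + (0:ℝ) * f₁ x))
        = φ₀ x * ((2 * ((1 - (1:ℝ)) * f₀ x + (1:ℝ) * f₁ x)
              - 2 * ((1 - (0:ℝ)) * f₀ x + (0:ℝ) * f₁ x))
            * (Real.exp (2 * ((1 - (1:ℝ)) * f₀ x + (1:ℝ) * f₁ x))
              - Real.exp (2 * ((1 - (0:ℝ)) * f₀ x + (0:ℝ) * f₁ x)))) := by ring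
    rw [heq] at h1'
    have h5 := (mul_eq_zero.1 h1').resolve_left h2.ne'
    rcases mul_eq_zero.1 h5 with h | h
    · linarith
    · have := Real.exp_injective (sub_eq_zero.1 h)
      linarith
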